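/- arXiv:1412.8721 — 3 statements merged into one kernel-verified Lean document; each statement's English description precedes it below -/
import Mathlib

section
/- For all n ≥ 0, ∏_{i=0}^{n-1}(x + (a+b)·r + a·i) = Σ_{k=0}^{n} G_{a,b}(n,k;r) · ∏_{i=0}^{k-1}(x − b·i), as an identity of polynomials in x (or for all x in a commutative ring). -/
open Finset

/-- The generalized r-Lah numbers `G_{a,b}(n,k;r)`. -/
def genLah {R : Type*} [CommRing R] (a b : R) (r : ℕ) : ℕ → ℕ → R
  | 0, 0 => 1
  | 0, _ + 1 => 0
  | n + 1, 0 => (a * ((n : R) + (r : R)) + b * (r : R)) * genLah a b r n 0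
  | n + 1, k + 1 => genLah a b r n k +
      (a * (n : R) + b * ((k : R) + 1) + (a + b) * (r : R)) * genLah a b r n (k + 1)

lemma genLah_eq_zero {R : Type*} [CommRing R] (a b : R) (r : ℕ) :
    ∀ n k : ℕ, n < k → genLah a b r n k = 0
  | 0, _ + 1, _ => rfl
  | n + 1, k + 1, h => by
      rw [genLah, genLah_eq_zero a b r n k (by omega),
        genLah_eq_zero a b r n (k + 1) (by omega)]
      ring

theorem genLah_horizontal_generating {R : Type*} [CommRing R] (a b : R) (r n : ℕ) (x : R) :
    ∏ i ∈ range n, (x + (a + b) * (r : R) + a * (i : R)) =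
      ∑ k ∈ range (n + 1), genLah a b r n k * ∏ i ∈ range k, (x - b * (i : R)) := by
  induction n with
  | zero => simp [genLah]
  | succ n ih =>
    rw [prod_range_succ, ih, Finset.sum_mul]
    have key : ∀ k ∈ range (n + 1),
        genLah a b r n k * (∏ i ∈ range k, (x - b * (i : R))) * (x + (a + b) * (r : R) + a * (n : R))
          = genLah a b r n k * (∏ i ∈ range (k + 1), (x - b * (i : R)))
            + (a * (n : R) + b * (k : R) + (a + b) * (r : R)) *
              (genLah a b r n k * ∏ i ∈ range k, (x - b * (i : R))) := by
      intro k _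
      rw [prod_range_succ]
      ring
    rw [sum_congr rfl key, sum_add_distrib]
    -- RHS: split off the k = 0 term
    rw [sum_range_succ' (fun k => genLah a b r (n + 1) k * ∏ i ∈ range k, (x - b * (i : R))) (n + 1)]
    have expand : ∀ k ∈ range (n + 1),
        genLah a b r (n + 1) (k + 1) * ∏ i ∈ range (k + 1), (x - b * (i : R))
          = genLah a b r n k * (∏ i ∈ range (k + 1), (x - b * (i : R)))
            + (a * (n : R) + b * ((k : R) + 1) + (a + b) * (r : R)) *
              (genLah a b r n (k + 1) * ∏ i ∈ range (k + 1), (x - b * (i : R))) := by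
      intro k _
      rw [genLah]
      ring
    rw [sum_congr rfl expand, sum_add_distrib]
    have shift :
        ∑ k ∈ range (n + 1), (a * (n : R) + b * ((k : R) + 1) + (a + b) * (r : R)) *
            (genLah a b r n (k + 1) * ∏ i ∈ range (k + 1), (x - b * (i : R)))
          = ∑ k ∈ range (n + 2), (a * (n : R) + b * (k : R) + (a + b) * (r : R)) *
              (genLah a b r n k * ∏ i ∈ range k, (x - b * (i : R)))
            - (a * (n : R) + b * ((0 : ℕ) : R) + (a + b) * (r : R)) *
              (genLah a b r n 0 * ∏ i ∈ range 0, (x - b * (i : R))) := by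
      rw [sum_range_succ' (fun k => (a * (n : R) + b * (k : R) + (a + b) * (r : R)) *
        (genLah a b r n k * ∏ i ∈ range k, (x - b * (i : R)))) (n + 1)]
      have cast_eq : ∀ k ∈ range (n + 1),
          (a * (n : R) + b * (((k + 1 : ℕ)) : R) + (a + b) * (r : R)) *
              (genLah a b r n (k + 1) * ∏ i ∈ range (k + 1), (x - b * (i : R)))
            = (a * (n : R) + b * ((k : R) + 1) + (a + b) * (r : R)) *
              (genLah a b r n (k + 1) * ∏ i ∈ range (k + 1), (x - b * (i : R))) := by
        intro k _
        push_cast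
        ring
      rw [sum_congr rfl cast_eq]
      ring
    rw [shift, sum_range_succ (fun k => (a * (n : R) + b * (k : R) + (a + b) * (r : R)) *
      (genLah a b r n k * ∏ i ∈ range k, (x - b * (i : R)))) (n + 1),
      genLah_eq_zero a b r n (n + 1) (by omega),
      show genLah a b r (n + 1) 0 = (a * ((n : R) + (r : R)) + b * (r : R)) * genLah a b r n 0 from rfl]
    simp only [range_zero, prod_empty, mul_one, Nat.cast_zero]
    ring
end

section
/- For 0 ≤ k < n, G_{a,b}(n,k;r) = Σ_{i=0}^{k} (a·(n+r−i−1) + b·(k+r−i)) · G_{a,b}(n−i−1,k−i;r). -/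
open Finset

theorem genLah_diagonal_recurrence {R : Type*} [CommRing R] (a b : R) (r n k : ℕ)
    (hkn : k < n) :
    genLah a b r n k =
      ∑ i ∈ range (k + 1),
        (a * ((n : R) + (r : R) - (i : R) - 1) + b * ((k : R) + (r : R) - (i : R))) *
          genLah a b r (n - i - 1) (k - i) := by
  induction k generalizing n with
  | zero =>
    obtain ⟨m, rfl⟩ : ∃ m, n = m + 1 := ⟨n - 1, by omega⟩
    simp [genLah]
    ring
  | succ k ih =>
    obtain ⟨m, rfl⟩ : ∃ m, n = m + 1 := ⟨n - 1, by omega⟩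
    have hk : k < m := by omega
    show genLah a b r m k +
      (a * (m : R) + b * ((k : R) + 1) + (a + b) * (r : R)) * genLah a b r m (k + 1) = _
    rw [ih m hk]
    conv_rhs => rw [Finset.sum_range_succ']
    congr 1
    · apply Finset.sum_congr rfl
      intro i hi
      simp only [Nat.succ_sub_succ]
      push_cast
      ring_nf
    · simp only [Nat.sub_zero, Nat.add_sub_cancel]
      push_cast
      ring
end

section
/- For all n, m, k, r ≥ 0, G_{a,b}(n+m,k;r) = Σ_{i=0}^{n} Σ_{j=0}^{m} C(n,i) · G_{a,b}(m,j;r) · G_{a,b}(i,k−j;0) · ∏_{ℓ=0}^{n−i−1}(a·ℓ + a·(m+r) + b·(j+r)), where terms with j > k are interpreted as zero (i.e., G_{a,b}(i,k−j;0)=0 when j > k). -/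
open Finset

lemma genLah_zero_of_lt {R : Type*} [CommRing R] (a b : R) (r : ℕ) :
    ∀ n k, n < k → genLah a b r n k = 0 := by
  intro n
  induction n with
  | zero => intro k hk; match k, hk with | k + 1, _ => rfl
  | succ n ih =>
    intro k hk
    match k, hk with
    | k + 1, hk =>
      show genLah a b r n k + _ * genLah a b r n (k + 1) = 0
      rw [ih k (by omega), ih (k + 1) (by omega)]; ring

lemma genLah_succ {R : Type*} [CommRing R] (a b : R) (r n k : ℕ) :
    genLah a b r (n + 1) k =
      (if 1 ≤ k then genLah a b r n (k - 1) else 0) +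
        (a * (n : R) + b * (k : R) + (a + b) * (r : R)) * genLah a b r n k := by
  cases k with
  | zero => show (a * ((n : R) + r) + b * r) * _ = _; simp; ring_nf
  | succ k => show genLah a b r n k + _ = _; simp [Nat.cast_succ]

/-- Auxiliary inner factor. -/
def gU {R : Type*} [CommRing R] (a b : R) (r m k i j : ℕ) : R :=
  genLah a b r m j * (if j ≤ k then genLah a b 0 i (k - j) else 0)

/-- Auxiliary product factor. -/
def gP {R : Type*} [CommRing R] (a b : R) (m r j t : ℕ) : R :=
  ∏ l ∈ range t, (a * (l : R) + a * ((m : R) + (r : R)) + b * ((j : R) + (r : R)))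

/-- Auxiliary double sum. -/
def gS {R : Type*} [CommRing R] (a b : R) (r n m k : ℕ) : R :=
  ∑ i ∈ range (n + 1), ∑ j ∈ range (m + 1),
    (n.choose i : R) * gU a b r m k i j * gP a b m r j (n - i)

lemma gP_succ {R : Type*} [CommRing R] (a b : R) (m r j t : ℕ) :
    gP a b m r j (t + 1) = gP a b m r j t *
      (a * (t : R) + a * ((m : R) + (r : R)) + b * ((j : R) + (r : R))) :=
  Finset.prod_range_succ _ _

lemma gU_succ {R : Type*} [CommRing R] (a b : R) (r m k i j : ℕ) :
    gU a b r m k (i + 1) j = (if 1 ≤ k then gU a b r m (k - 1) i j else 0) +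
      (a * (i : R) + b * (k : R) - b * (j : R)) * gU a b r m k i j := by
  unfold gU
  by_cases hjk : j ≤ k
  · rw [if_pos hjk, genLah_succ]
    by_cases hlt : j < k
    · rw [if_pos (by omega : 1 ≤ k - j), if_pos (by omega : 1 ≤ k),
        if_pos (show j ≤ k - 1 by omega)]
      rw [show k - j - 1 = k - 1 - j from by omega, Nat.cast_sub hjk]
      simp only [if_pos hjk]
      push_cast
      ring
    · have hj : j = k := by omega
      subst hj
      rw [Nat.sub_self, if_neg (by omega : ¬ 1 ≤ (0 : ℕ))]
      by_cases hk : 1 ≤ j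
      · rw [if_pos hk, if_neg (show ¬ j ≤ j - 1 by omega)]
        simp only [le_refl, if_true]
        push_cast
        ring
      · have : j = 0 := by omega
        subst this
        simp
        ring
  · rw [if_neg hjk, if_neg (show ¬ j ≤ k - 1 by omega)]
    split_ifs <;> simp [hjk]

lemma gS_succ {R : Type*} [CommRing R] (a b : R) (r n m k : ℕ) :
    gS a b r (n + 1) m k = (if 1 ≤ k then gS a b r n m (k - 1) else 0) +
      (a * (n : R) + a * (m : R) + b * (k : R) + (a + b) * (r : R)) * gS a b r n m k := by
  unfold gS
  rw [Finset.sum_range_succ']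
  have h1 : ∀ i ∈ range (n + 1),
      (∑ j ∈ range (m + 1),
        (((n + 1).choose (i + 1) : ℕ) : R) * gU a b r m k (i + 1) j * gP a b m r j (n + 1 - (i + 1))) =
      (∑ j ∈ range (m + 1), (n.choose i : R) * gU a b r m k (i + 1) j * gP a b m r j (n - i)) +
      (∑ j ∈ range (m + 1), (n.choose (i + 1) : R) * gU a b r m k (i + 1) j * gP a b m r j (n + 1 - (i + 1))) := by
    intro i hi
    rw [← Finset.sum_add_distrib]
    refine Finset.sum_congr rfl fun j _ => ?_
    rw [Nat.choose_succ_succ, Nat.cast_add, show n + 1 - (i + 1) = n - i from by omega]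
    ring
  rw [Finset.sum_congr rfl h1, Finset.sum_add_distrib]
  have h2 : (∑ x ∈ range (n + 1), ∑ j ∈ range (m + 1),
        (n.choose (x + 1) : R) * gU a b r m k (x + 1) j * gP a b m r j (n + 1 - (x + 1))) +
      ∑ j ∈ range (m + 1),
        (((n + 1).choose 0 : ℕ) : R) * gU a b r m k 0 j * gP a b m r j (n + 1 - 0) =
      ∑ i ∈ range (n + 1), ∑ j ∈ range (m + 1),
        (n.choose i : R) * gU a b r m k i j * gP a b m r j (n + 1 - i) := by
    have e := ((Finset.sum_range_succ' (fun i => ∑ j ∈ range (m + 1),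
        (n.choose i : R) * gU a b r m k i j * gP a b m r j (n + 1 - i)) (n + 1)).symm).trans
      (Finset.sum_range_succ (fun i => ∑ j ∈ range (m + 1),
        (n.choose i : R) * gU a b r m k i j * gP a b m r j (n + 1 - i)) (n + 1))
    simp only [Nat.choose_succ_self, Nat.cast_zero, zero_mul, Finset.sum_const_zero, add_zero,
      Nat.choose_zero_right, Nat.cast_one] at e ⊢
    exact e
  rw [add_assoc, h2]
  by_cases hk : 1 ≤ k
  · rw [if_pos hk, ← Finset.sum_add_distrib, Finset.mul_sum, ← Finset.sum_add_distrib]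
    refine Finset.sum_congr rfl fun i hi => ?_
    rw [Finset.mul_sum, ← Finset.sum_add_distrib, ← Finset.sum_add_distrib]
    refine Finset.sum_congr rfl fun j hj => ?_
    have hin : i ≤ n := by simpa [Nat.lt_succ_iff] using hi
    rw [gU_succ, if_pos hk, show n + 1 - i = (n - i) + 1 from by omega, gP_succ,
      Nat.cast_sub hin]
    ring
  · rw [if_neg hk, ← Finset.sum_add_distrib, zero_add, Finset.mul_sum]
    refine Finset.sum_congr rfl fun i hi => ?_
    rw [Finset.mul_sum, ← Finset.sum_add_distrib]
    refine Finset.sum_congr rfl fun j hj => ?_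
    have hin : i ≤ n := by simpa [Nat.lt_succ_iff] using hi
    rw [gU_succ, if_neg hk, show n + 1 - i = (n - i) + 1 from by omega, gP_succ,
      Nat.cast_sub hin]
    ring

theorem genLah_add_formula {R : Type*} [CommRing R] (a b : R) (r n m k : ℕ) :
    genLah a b r (n + m) k =
      ∑ i ∈ range (n + 1), ∑ j ∈ range (m + 1),
        (n.choose i : R) * genLah a b r m j *
          (if j ≤ k then genLah a b 0 i (k - j) else 0) *
          ∏ l ∈ range (n - i), (a * (l : R) + a * ((m : R) + (r : R)) + b * ((j : R) + (r : R))) := by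
  have hgs : ∀ (n k : ℕ), gS a b r n m k =
      ∑ i ∈ range (n + 1), ∑ j ∈ range (m + 1),
        (n.choose i : R) * genLah a b r m j *
          (if j ≤ k then genLah a b 0 i (k - j) else 0) *
          ∏ l ∈ range (n - i), (a * (l : R) + a * ((m : R) + (r : R)) + b * ((j : R) + (r : R))) := by
    intro n k
    simp [gS, gU, gP, mul_assoc]
  induction n generalizing k with
  | zero =>
    rw [sum_range_one]
    simp only [Nat.choose_self, Nat.cast_one, Nat.zero_sub, range_zero, prod_empty, one_mul,
      mul_one, Nat.zero_add]
    rw [show (∑ j ∈ range (m + 1), genLah a b r m j *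
        (if j ≤ k then genLah a b 0 0 (k - j) else 0)) =
        ∑ j ∈ range (m + 1), (if j = k then genLah a b r m j else 0) from ?_]
    · rw [Finset.sum_ite_eq' (range (m + 1)) k]
      by_cases hk : k ≤ m
      · simp [mem_range, Nat.lt_succ_iff, hk]
      · rw [if_neg (by simp [mem_range]; omega), genLah_zero_of_lt a b r m k (by omega)]
    · refine Finset.sum_congr rfl fun j _ => ?_
      by_cases hjk : j = k
      · subst hjk; simp [genLah]
      · by_cases h2 : j ≤ k
        · have : k - j = (k - j - 1) + 1 := by omega
          rw [if_pos h2, this]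
          simp [genLah, hjk]
        · simp [h2, hjk]
  | succ n ih =>
    rw [show n + 1 + m = n + m + 1 from by omega, genLah_succ]
    have hk1 : genLah a b r (n + m) k = gS a b r n m k := (ih k).trans (hgs n k).symm
    have hk2 : genLah a b r (n + m) (k - 1) = gS a b r n m (k - 1) :=
      (ih (k - 1)).trans (hgs n (k - 1)).symm
    rw [hk1, hk2, ← hgs (n + 1) k, gS_succ]
    push_cast
    ring_nf
end
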